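/- Let A be a Hopf χ-coalgebra with antipode S and χ-action φ. Then for all x ∈ H and e ∈ E: φ_{x,e} ∘ S_x = S_{χ(e)x} ∘ φ_{x⁻¹, x⁻¹·(e⁻¹)}. -/

import Mathlib

open TensorProduct

/-- Transport along an equality of indices. -/
def fcast (k : Type) [CommRing k] {ι : Type} (M : ι → Type)
    [∀ i, AddCommGroup (M i)] [∀ i, Module k (M i)] {x y : ι} (h : x = y) :
    M x →ₗ[k] M y := by subst h; exact LinearMap.id

theorem fcast_self (k : Type) [CommRing k] {ι : Type} (M : ι → Type)
    [∀ i, AddCommGroup (M i)] [∀ i, Module k (M i)] {x : ι} (h : x = x) (a : M x) :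
    fcast k M h a = a := rfl

theorem fcast_fcast (k : Type) [CommRing k] {ι : Type} (M : ι → Type)
    [∀ i, AddCommGroup (M i)] [∀ i, Module k (M i)] {x y z : ι} (h1 : x = y) (h2 : y = z) (a : M x) :
    fcast k M h2 (fcast k M h1 a) = fcast k M (h1.trans h2) a := by subst h1; subst h2; rfl

variable {k : Type} [CommRing k] {H : Type} [Group H]
  (A : H → Type) [∀ x, Ring (A x)] [∀ x, Algebra k (A x)]
  (Δ : ∀ x y : H, A (x * y) →ₐ[k] A x ⊗[k] A y)
  (B : Type) [Ring B] [Algebra k B]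

noncomputable def conv (u v : H) (L : A u →ₗ[k] B) (R : A v →ₗ[k] B) : A (u * v) →ₗ[k] B :=
  LinearMap.mul' k B ∘ₗ TensorProduct.map L R ∘ₗ (Δ u v).toLinearMap

theorem conv_apply (u v : H) (L : A u →ₗ[k] B) (R : A v →ₗ[k] B) (a : A (u * v)) :
    conv A Δ B u v L R a = LinearMap.mul' k B (TensorProduct.map L R (Δ u v a)) := rfl

-- cast lemmas for conv
theorem conv_cast_left {u u' v : H} (h : u = u') (L : A u' →ₗ[k] B) (R : A v →ₗ[k] B)
    (a : A (u * v)) :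
    conv A Δ B u v (L ∘ₗ fcast k A h) R a
      = conv A Δ B u' v L R (fcast k A (by rw [h]) a) := by
  subst h
  have : L ∘ₗ fcast k A rfl = L := rfl
  rw [this, fcast_self]

theorem conv_cast_right {u v v' : H} (h : v = v') (L : A u →ₗ[k] B) (R : A v' →ₗ[k] B)
    (a : A (u * v)) :
    conv A Δ B u v L (R ∘ₗ fcast k A h) a
      = conv A Δ B u v' L R (fcast k A (by rw [h]) a) := by
  subst h
  have : R ∘ₗ fcast k A rfl = R := rfl
  rw [this, fcast_self]


theorem map_map {M N P Q M' N' : Type} [AddCommGroup M] [AddCommGroup N] [AddCommGroup P]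
    [AddCommGroup Q] [AddCommGroup M'] [AddCommGroup N'] [Module k M] [Module k N] [Module k P]
    [Module k Q] [Module k M'] [Module k N']
    (f₂ : M' →ₗ[k] P) (f₁ : M →ₗ[k] M') (g₂ : N' →ₗ[k] Q) (g₁ : N →ₗ[k] N') (t : M ⊗[k] N) :
    TensorProduct.map f₂ g₂ (TensorProduct.map f₁ g₁ t)
      = TensorProduct.map (f₂ ∘ₗ f₁) (g₂ ∘ₗ g₁) t := by
  rw [TensorProduct.map_comp]; rfl

theorem conv_assoc
    (coassoc : ∀ (x y z : H) (a : A (x * y * z)),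
      (TensorProduct.assoc k (A x) (A y) (A z))
        ((TensorProduct.map (Δ x y).toLinearMap (LinearMap.id : A z →ₗ[k] A z))
          (Δ (x*y) z a))
      = (TensorProduct.map (LinearMap.id : A x →ₗ[k] A x) (Δ y z).toLinearMap)
          (Δ x (y*z) (fcast k A (mul_assoc x y z) a)))
    (u v w : H) (L : A u →ₗ[k] B) (M : A v →ₗ[k] B) (N : A w →ₗ[k] B) (a : A (u * v * w)) :
    conv A Δ B (u*v) w (conv A Δ B u v L M) N a
      = conv A Δ B u (v*w) L (conv A Δ B v w M N) (fcast k A (mul_assoc u v w) a) := by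
  have key : (LinearMap.mul' k B ∘ₗ TensorProduct.map (LinearMap.mul' k B ∘ₗ TensorProduct.map L M) N)
      = (LinearMap.mul' k B ∘ₗ TensorProduct.map L (LinearMap.mul' k B ∘ₗ TensorProduct.map M N))
        ∘ₗ (TensorProduct.assoc k (A u) (A v) (A w)).toLinearMap := by
    apply TensorProduct.ext_threefold
    intro a b c
    simp [mul_assoc]
  calc conv A Δ B (u*v) w (conv A Δ B u v L M) N a
      = LinearMap.mul' k B (TensorProduct.map (conv A Δ B u v L M) N (Δ (u*v) w a)) := rfl
    _ = LinearMap.mul' k B ((TensorProduct.map (LinearMap.mul' k B ∘ₗ TensorProduct.map L M) N)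
          ((TensorProduct.map (Δ u v).toLinearMap (LinearMap.id : A w →ₗ[k] A w))
            (Δ (u*v) w a))) := by rw [_root_.map_map]; rfl
    _ = (LinearMap.mul' k B ∘ₗ TensorProduct.map L (LinearMap.mul' k B ∘ₗ TensorProduct.map M N))
          ((TensorProduct.assoc k (A u) (A v) (A w))
            ((TensorProduct.map (Δ u v).toLinearMap (LinearMap.id : A w →ₗ[k] A w))
              (Δ (u*v) w a))) := LinearMap.congr_fun key _
    _ = (LinearMap.mul' k B ∘ₗ TensorProduct.map L (LinearMap.mul' k B ∘ₗ TensorProduct.map M N))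
          ((TensorProduct.map (LinearMap.id : A u →ₗ[k] A u) (Δ v w).toLinearMap)
            (Δ u (v*w) (fcast k A (mul_assoc u v w) a))) := by rw [coassoc]
    _ = conv A Δ B u (v*w) L (conv A Δ B v w M N) (fcast k A (mul_assoc u v w) a) := by
          simp only [LinearMap.coe_comp, Function.comp_apply, _root_.map_map]
          rfl

theorem conv_unit_left (ε : A 1 →ₐ[k] k)
    (counit_left : ∀ (x : H) (a : A (1 * x)),
      (TensorProduct.lid k (A x))
        ((TensorProduct.map ε.toLinearMap (LinearMap.id : A x →ₗ[k] A x)) (Δ 1 x a))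
      = fcast k A (one_mul x) a)
    (u : H) (L : A u →ₗ[k] B) (a : A (1 * u)) :
    conv A Δ B 1 u (Algebra.linearMap k B ∘ₗ ε.toLinearMap) L a
      = L (fcast k A (one_mul u) a) := by
  rw [← counit_left]
  have key : (LinearMap.mul' k B ∘ₗ TensorProduct.map (Algebra.linearMap k B ∘ₗ ε.toLinearMap) L)
      = L ∘ₗ (TensorProduct.lid k (A u)).toLinearMap
          ∘ₗ TensorProduct.map ε.toLinearMap (LinearMap.id : A u →ₗ[k] A u) := by
    apply TensorProduct.ext'
    intro a b
    simp only [LinearMap.coe_comp, Function.comp_apply, LinearMap.mul'_apply,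
      TensorProduct.map_tmul, TensorProduct.lid_tmul, LinearMap.id_coe, id_eq,
      LinearEquiv.coe_coe, Algebra.linearMap_apply, AlgHom.toLinearMap_apply, map_smul]
    rw [Algebra.smul_def]
  exact LinearMap.congr_fun key _

theorem conv_unit_right (ε : A 1 →ₐ[k] k)
    (counit_right : ∀ (x : H) (a : A (x * 1)),
      (TensorProduct.rid k (A x))
        ((TensorProduct.map (LinearMap.id : A x →ₗ[k] A x) ε.toLinearMap) (Δ x 1 a))
      = fcast k A (mul_one x) a)
    (u : H) (L : A u →ₗ[k] B) (a : A (u * 1)) :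
    conv A Δ B u 1 L (Algebra.linearMap k B ∘ₗ ε.toLinearMap) a
      = L (fcast k A (mul_one u) a) := by
  rw [← counit_right]
  have key : (LinearMap.mul' k B ∘ₗ TensorProduct.map L (Algebra.linearMap k B ∘ₗ ε.toLinearMap))
      = L ∘ₗ (TensorProduct.rid k (A u)).toLinearMap
          ∘ₗ TensorProduct.map (LinearMap.id : A u →ₗ[k] A u) ε.toLinearMap := by
    apply TensorProduct.ext'
    intro a b
    simp only [LinearMap.coe_comp, Function.comp_apply, LinearMap.mul'_apply,
      TensorProduct.map_tmul, TensorProduct.rid_tmul, LinearMap.id_coe, id_eq,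
      LinearEquiv.coe_coe, Algebra.linearMap_apply, AlgHom.toLinearMap_apply, map_smul]
    rw [Algebra.smul_def, Algebra.commutes]
  exact LinearMap.congr_fun key _

theorem conv_inverse_unique
    (coassoc : ∀ (x y z : H) (a : A (x * y * z)),
      (TensorProduct.assoc k (A x) (A y) (A z))
        ((TensorProduct.map (Δ x y).toLinearMap (LinearMap.id : A z →ₗ[k] A z))
          (Δ (x*y) z a))
      = (TensorProduct.map (LinearMap.id : A x →ₗ[k] A x) (Δ y z).toLinearMap)
          (Δ x (y*z) (fcast k A (mul_assoc x y z) a)))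
    (ε : A 1 →ₐ[k] k)
    (counit_left : ∀ (x : H) (a : A (1 * x)),
      (TensorProduct.lid k (A x))
        ((TensorProduct.map ε.toLinearMap (LinearMap.id : A x →ₗ[k] A x)) (Δ 1 x a))
      = fcast k A (one_mul x) a)
    (counit_right : ∀ (x : H) (a : A (x * 1)),
      (TensorProduct.rid k (A x))
        ((TensorProduct.map (LinearMap.id : A x →ₗ[k] A x) ε.toLinearMap) (Δ x 1 a))
      = fcast k A (mul_one x) a)
    (u : H) (F : A u⁻¹ →ₗ[k] B) (P : A u →ₗ[k] B) (G : A u⁻¹ →ₗ[k] B)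
    (hFP : ∀ b : A (u⁻¹ * u), conv A Δ B u⁻¹ u F P b
      = (Algebra.linearMap k B ∘ₗ ε.toLinearMap) (fcast k A (inv_mul_cancel u) b))
    (hPG : ∀ b : A (u * u⁻¹), conv A Δ B u u⁻¹ P G b
      = (Algebra.linearMap k B ∘ₗ ε.toLinearMap) (fcast k A (mul_inv_cancel u) b))
    (a : A u⁻¹) : F a = G a := by
  have h0 : u⁻¹ = u⁻¹ * u * u⁻¹ := by group
  have hL : conv A Δ B (u⁻¹*u) u⁻¹ (conv A Δ B u⁻¹ u F P) G (fcast k A h0 a) = G a := by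
    have hFP' : conv A Δ B u⁻¹ u F P
        = (Algebra.linearMap k B ∘ₗ ε.toLinearMap) ∘ₗ fcast k A (inv_mul_cancel u) :=
      LinearMap.ext hFP
    rw [hFP', conv_cast_left A Δ B (inv_mul_cancel u) _ G _,
        conv_unit_left A Δ B ε counit_left u⁻¹ G _]
    simp only [fcast_fcast, fcast_self]
  have hR : conv A Δ B u⁻¹ (u*u⁻¹) F (conv A Δ B u u⁻¹ P G)
      (fcast k A (mul_assoc u⁻¹ u u⁻¹) (fcast k A h0 a)) = F a := by
    have hPG' : conv A Δ B u u⁻¹ P G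
        = (Algebra.linearMap k B ∘ₗ ε.toLinearMap) ∘ₗ fcast k A (mul_inv_cancel u) :=
      LinearMap.ext hPG
    rw [hPG', conv_cast_right A Δ B (mul_inv_cancel u) F _ _,
        conv_unit_right A Δ B ε counit_right u⁻¹ F _]
    simp only [fcast_fcast, fcast_self]
  rw [← hR, ← conv_assoc A Δ B coassoc u⁻¹ u u⁻¹ F P G (fcast k A h0 a), hL]

theorem map_fcast_delta {u v v' : H} (h : v = v') (b : A (u * v)) :
    TensorProduct.map (LinearMap.id : A u →ₗ[k] A u) (fcast k A h) (Δ u v b)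
      = Δ u v' (fcast k A (by rw [h]) b) := by
  subst h
  have h1 : ∀ (p : v = v), fcast k A p = (LinearMap.id : A v →ₗ[k] A v) := fun p => rfl
  have h2 : ∀ (p : u * v = u * v) (c : A (u * v)), fcast k A p c = c := fun p c => rfl
  rw [h1, h2, TensorProduct.map_id]
  rfl

/-- The antipode of a Hopf `χ`-coalgebra is compatible with the `χ`-action:
`φ_{x,e} ∘ S_x = S_{χ(e)x} ∘ φ_{x⁻¹, x⁻¹·(e⁻¹)}`. -/
theorem hopfXiCoalgebra_antipode_action
    {k : Type} [CommRing k] {E H : Type} [Group E] [Group H]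
    (χ : E →* H) (act : H →* MulAut E)
    (hequiv : ∀ (x : H) (e : E), χ (act x e) = x * χ e * x⁻¹)
    (hpeiffer : ∀ e f : E, act (χ e) f = e * f * e⁻¹)
    (A : H → Type) [∀ x, Ring (A x)] [∀ x, Algebra k (A x)]
    (Δ : ∀ x y : H, A (x * y) →ₐ[k] A x ⊗[k] A y)
    (ε : A 1 →ₐ[k] k)
    (coassoc : ∀ (x y z : H) (a : A (x * y * z)),
      (TensorProduct.assoc k (A x) (A y) (A z))
        ((TensorProduct.map (Δ x y).toLinearMap (LinearMap.id : A z →ₗ[k] A z))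
          (Δ (x*y) z a))
      = (TensorProduct.map (LinearMap.id : A x →ₗ[k] A x) (Δ y z).toLinearMap)
          (Δ x (y*z) (fcast k A (mul_assoc x y z) a)))
    (counit_left : ∀ (x : H) (a : A (1 * x)),
      (TensorProduct.lid k (A x))
        ((TensorProduct.map ε.toLinearMap (LinearMap.id : A x →ₗ[k] A x)) (Δ 1 x a))
      = fcast k A (one_mul x) a)
    (counit_right : ∀ (x : H) (a : A (x * 1)),
      (TensorProduct.rid k (A x))
        ((TensorProduct.map (LinearMap.id : A x →ₗ[k] A x) ε.toLinearMap) (Δ x 1 a))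
      = fcast k A (mul_one x) a)
    (S : ∀ x : H, A x⁻¹ →ₗ[k] A x)
    (Sbij : ∀ x : H, Function.Bijective (S x))
    (hS_left : ∀ (x : H) (a : A (x⁻¹ * x)),
      (LinearMap.mul' k (A x))
        ((TensorProduct.map (S x) (LinearMap.id : A x →ₗ[k] A x)) (Δ x⁻¹ x a))
      = algebraMap k (A x) (ε (fcast k A (inv_mul_cancel x) a)))
    (hS_right : ∀ (x : H) (a : A (x * x⁻¹)),
      (LinearMap.mul' k (A x))
        ((TensorProduct.map (LinearMap.id : A x →ₗ[k] A x) (S x)) (Δ x x⁻¹ a))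
      = algebraMap k (A x) (ε (fcast k A (mul_inv_cancel x) a)))
    (φ : ∀ (x : H) (e : E), A x →ₐ[k] A (χ e * x))
    (phi_one : ∀ (x : H) (a : A x),
      φ x 1 a = fcast k A (show x = χ (1 : E) * x by rw [map_one, one_mul]) a)
    (phi_comp : ∀ (x : H) (e f : E) (a : A x),
      φ (χ e * x) f (φ x e a)
        = fcast k A (show χ (f * e) * x = χ f * (χ e * x) by rw [map_mul, mul_assoc])
            (φ x (f * e) a))
    (phi_delta : ∀ (x y : H) (e f : E) (a : A (x * y)),
      (TensorProduct.map (φ x e).toLinearMap (φ y f).toLinearMap) (Δ x y a)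
        = Δ (χ e * x) (χ f * y)
            (fcast k A
              (show χ (e * act x f) * (x * y) = (χ e * x) * (χ f * y) by
                rw [map_mul, hequiv]; group)
              (φ (x * y) (e * act x f) a)))
    :
    ∀ (x : H) (e : E) (a : A x⁻¹),
      φ x e (S x a)
        = S (χ e * x)
            (fcast k A
              (show χ (act x⁻¹ e⁻¹) * x⁻¹ = (χ e * x)⁻¹ by rw [hequiv, map_inv]; group)
              (φ x⁻¹ (act x⁻¹ e⁻¹) a)) := by 
  intro x e a
  have hf : χ (act x⁻¹ e⁻¹) * x⁻¹ = (χ e * x)⁻¹ := by rw [hequiv, map_inv]; group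
  have key : ∀ t : A x ⊗[k] A x,
      LinearMap.mul' k (A (χ e * x))
        (TensorProduct.map (φ x e).toLinearMap (φ x e).toLinearMap t)
      = φ x e (LinearMap.mul' k (A x) t) := by
    intro t
    have h : LinearMap.mul' k (A (χ e * x))
          ∘ₗ TensorProduct.map (φ x e).toLinearMap (φ x e).toLinearMap
        = (φ x e).toLinearMap ∘ₗ LinearMap.mul' k (A x) := by
      apply TensorProduct.ext'
      intro a b
      simp
    exact LinearMap.congr_fun h t
  refine conv_inverse_unique A Δ (A (χ e * x)) coassoc ε counit_left counit_right x
    ((φ x e).toLinearMap ∘ₗ S x) (φ x e).toLinearMap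
    (S (χ e * x) ∘ₗ fcast k A hf ∘ₗ (φ x⁻¹ (act x⁻¹ e⁻¹)).toLinearMap) ?_ ?_ a
  · -- hFP
    intro b
    calc conv A Δ (A (χ e * x)) x⁻¹ x ((φ x e).toLinearMap ∘ₗ S x) (φ x e).toLinearMap b
        = LinearMap.mul' k (A (χ e * x))
            (TensorProduct.map (φ x e).toLinearMap (φ x e).toLinearMap
              (TensorProduct.map (S x) (LinearMap.id : A x →ₗ[k] A x) (Δ x⁻¹ x b))) := by
          rw [_root_.map_map]; rfl
      _ = φ x e (LinearMap.mul' k (A x)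
            (TensorProduct.map (S x) (LinearMap.id : A x →ₗ[k] A x) (Δ x⁻¹ x b))) := key _
      _ = φ x e (algebraMap k (A x) (ε (fcast k A (inv_mul_cancel x) b))) := by rw [hS_left]
      _ = (Algebra.linearMap k (A (χ e * x)) ∘ₗ ε.toLinearMap)
            (fcast k A (inv_mul_cancel x) b) := by rw [AlgHom.commutes]; rfl
  · -- hPG
    intro b
    have hef : e * act x (act x⁻¹ e⁻¹) = 1 := by
      have h1 : act x (act x⁻¹ e⁻¹) = e⁻¹ := by
        calc act x (act x⁻¹ e⁻¹) = (act x * act x⁻¹) e⁻¹ := rfl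
          _ = act (x * x⁻¹) e⁻¹ := by rw [map_mul]
          _ = e⁻¹ := by rw [mul_inv_cancel, map_one]; rfl
      rw [h1, mul_inv_cancel]
    have phi_one' : ∀ (g : E) (hg : g = 1) (u : H) (hu : u = χ g * u) (c : A u),
        φ u g c = fcast k A hu c := by
      intro g hg
      subst hg
      intro u hu c
      rw [phi_one]
    calc conv A Δ (A (χ e * x)) x x⁻¹ (φ x e).toLinearMap
          (S (χ e * x) ∘ₗ fcast k A hf ∘ₗ (φ x⁻¹ (act x⁻¹ e⁻¹)).toLinearMap) b
        = LinearMap.mul' k (A (χ e * x))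
            (TensorProduct.map (LinearMap.id : A (χ e * x) →ₗ[k] A (χ e * x))
              (S (χ e * x) ∘ₗ fcast k A hf)
              (TensorProduct.map (φ x e).toLinearMap
                (φ x⁻¹ (act x⁻¹ e⁻¹)).toLinearMap (Δ x x⁻¹ b))) := by
          rw [_root_.map_map]; rfl
      _ = LinearMap.mul' k (A (χ e * x))
            (TensorProduct.map (LinearMap.id : A (χ e * x) →ₗ[k] A (χ e * x))
              (S (χ e * x) ∘ₗ fcast k A hf)
              (Δ (χ e * x) (χ (act x⁻¹ e⁻¹) * x⁻¹)
                (fcast k A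
                  (show χ (e * act x (act x⁻¹ e⁻¹)) * (x * x⁻¹)
                      = (χ e * x) * (χ (act x⁻¹ e⁻¹) * x⁻¹) by
                    rw [map_mul, hequiv]; group)
                  (φ (x * x⁻¹) (e * act x (act x⁻¹ e⁻¹)) b)))) := by
          rw [phi_delta x x⁻¹ e (act x⁻¹ e⁻¹) b]
      _ = LinearMap.mul' k (A (χ e * x))
            (TensorProduct.map (LinearMap.id : A (χ e * x) →ₗ[k] A (χ e * x))
              (S (χ e * x))
              (TensorProduct.map (LinearMap.id : A (χ e * x) →ₗ[k] A (χ e * x))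
                (fcast k A hf)
                (Δ (χ e * x) (χ (act x⁻¹ e⁻¹) * x⁻¹)
                  (fcast k A
                    (show χ (e * act x (act x⁻¹ e⁻¹)) * (x * x⁻¹)
                        = (χ e * x) * (χ (act x⁻¹ e⁻¹) * x⁻¹) by
                      rw [map_mul, hequiv]; group)
                    (φ (x * x⁻¹) (e * act x (act x⁻¹ e⁻¹)) b))))) := by
          rw [_root_.map_map]; rfl
      _ = LinearMap.mul' k (A (χ e * x))
            (TensorProduct.map (LinearMap.id : A (χ e * x) →ₗ[k] A (χ e * x))
              (S (χ e * x))
              (Δ (χ e * x) (χ e * x)⁻¹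
                (fcast k A (by rw [hf])
                  (fcast k A
                    (show χ (e * act x (act x⁻¹ e⁻¹)) * (x * x⁻¹)
                        = (χ e * x) * (χ (act x⁻¹ e⁻¹) * x⁻¹) by
                      rw [map_mul, hequiv]; group)
                    (φ (x * x⁻¹) (e * act x (act x⁻¹ e⁻¹)) b))))) := by
          rw [map_fcast_delta A Δ hf]
      _ = algebraMap k (A (χ e * x))
            (ε (fcast k A (mul_inv_cancel (χ e * x))
              (fcast k A (by rw [hf])
                (fcast k A
                  (show χ (e * act x (act x⁻¹ e⁻¹)) * (x * x⁻¹)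
                      = (χ e * x) * (χ (act x⁻¹ e⁻¹) * x⁻¹) by
                    rw [map_mul, hequiv]; group)
                  (φ (x * x⁻¹) (e * act x (act x⁻¹ e⁻¹)) b))))) :=
          hS_right (χ e * x) _
      _ = (Algebra.linearMap k (A (χ e * x)) ∘ₗ ε.toLinearMap)
            (fcast k A (mul_inv_cancel x) b) := by
          rw [phi_one' _ hef (x * x⁻¹)
            (show x * x⁻¹ = χ (e * act x (act x⁻¹ e⁻¹)) * (x * x⁻¹) by
              rw [hef, map_one, one_mul]) b]
          simp only [fcast_fcast]
          rfl
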